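/- arXiv:2309.12436 — 4 statements merged into one kernel-verified Lean document; each statement's English description precedes it below -/
import Mathlib

section
/- Let T be a type, α a linearly ordered type, P : T → T → Prop a symmetric binary predicate (i.e., ∀ s t, P s t ↔ P t s), f : T → α, and r : Fin n → T a relation whose rows are indexed by Fin n (distinct indices represent distinct rows under bag semantics). Then the denial constraint with a disequality predicate holds, i.e. (∀ i j, i ≠ j → ¬(P (r i) (r j) ∧ f (r i) ≠ f (r j))), if and only if the denial constraint with a single strict-inequality predicate holds, i.e. (∀ i j, i ≠ j → ¬(P (r i) (r j) ∧ f (r i) < f (r j))). -/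
/-- A homogeneous DC with a symmetric predicate `P` and one disequality predicate
holds iff the DC with the disequality replaced by a single strict inequality holds. -/
theorem dc_diseq_iff_lt {T α : Type*} [LinearOrder α] {n : ℕ}
    (P : T → T → Prop) (hP : ∀ s t, P s t ↔ P t s)
    (f : T → α) (r : Fin n → T) :
    (∀ i j, i ≠ j → ¬(P (r i) (r j) ∧ f (r i) ≠ f (r j))) ↔
    (∀ i j, i ≠ j → ¬(P (r i) (r j) ∧ f (r i) < f (r j))) := by
  constructor
  · intro h i j hij ⟨hp, hlt⟩
    exact h i j hij ⟨hp, ne_of_lt hlt⟩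
  · intro h i j hij ⟨hp, hne⟩
    rcases lt_or_gt_of_ne hne with hlt | hgt
    · exact h i j hij ⟨hp, hlt⟩
    · exact h j i hij.symm ⟨(hP _ _).mp hp, hgt⟩
end

section
/- Let T be a type, α a linearly ordered type, P : T → T → Prop a symmetric binary predicate (∀ s t, P s t ↔ P t s), f : Fin (ℓ+1) → T → α a family of ℓ+1 attribute projections, and r : Fin n → T a relation. Then the denial constraint (∀ i j, i ≠ j → ¬(P (r i) (r j) ∧ ∀ k : Fin (ℓ+1), f k (r i) ≠ f k (r j))) holds on r if and only if all 2^ℓ denial constraints obtained by replacing each of the first ℓ disequalities by a strict inequality in one of the two directions and the last disequality by < hold on r; that is, if and only if for every sign pattern ε : Fin ℓ → Bool, (∀ i j, i ≠ j → ¬(P (r i) (r j) ∧ (∀ k : Fin ℓ, if ε k then f k.castSucc (r i) < f k.castSucc (r j) else f k.castSucc (r j) < f k.castSucc (r i)) ∧ f (Fin.last ℓ) (r i) < f (Fin.last ℓ) (r j))). -/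
/-- A homogeneous DC with a symmetric predicate `P` and `ℓ+1` disequality predicates
holds iff the `2^ℓ` DCs obtained by replacing the first `ℓ` disequalities by strict
inequalities in either direction and the last one by `<` all hold. -/
theorem dc_diseq_iff_signPatterns {T α : Type*} [LinearOrder α] {n ℓ : ℕ}
    (P : T → T → Prop) (hP : ∀ s t, P s t ↔ P t s)
    (f : Fin (ℓ + 1) → T → α) (r : Fin n → T) :
    (∀ i j, i ≠ j → ¬(P (r i) (r j) ∧ ∀ k : Fin (ℓ + 1), f k (r i) ≠ f k (r j))) ↔
    (∀ ε : Fin ℓ → Bool, ∀ i j, i ≠ j →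
      ¬(P (r i) (r j) ∧
        (∀ k : Fin ℓ, if ε k then f k.castSucc (r i) < f k.castSucc (r j)
          else f k.castSucc (r j) < f k.castSucc (r i)) ∧
        f (Fin.last ℓ) (r i) < f (Fin.last ℓ) (r j))) := by
  constructor
  · rintro h ε i j hij ⟨hp, hlt, hlast⟩
    refine h i j hij ⟨hp, fun k => ?_⟩
    refine Fin.lastCases hlast.ne (fun k => ?_) k
    have := hlt k
    split at this
    · exact this.ne
    · exact this.ne'
  · rintro h i j hij ⟨hp, hne⟩
    rcases lt_or_gt_of_ne (hne (Fin.last ℓ)) with hl | hl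
    · refine h (fun k => decide (f k.castSucc (r i) < f k.castSucc (r j))) i j hij
        ⟨hp, fun k => ?_, hl⟩
      by_cases hk : f k.castSucc (r i) < f k.castSucc (r j)
      · simp [hk]
      · simp [hk, (hne k.castSucc).lt_or_gt.resolve_left hk]
    · refine h (fun k => decide (f k.castSucc (r j) < f k.castSucc (r i))) j i hij.symm
        ⟨(hP _ _).mp hp, fun k => ?_, hl⟩
      by_cases hk : f k.castSucc (r j) < f k.castSucc (r i)
      · simp [hk]
      · simp [hk, (hne k.castSucc).symm.lt_or_gt.resolve_left hk]
end

section
/- Let T be a type, p : Fin m → T → T → Prop a family of predicates, Q : T → T → Prop, k₀ : Fin m, and r : Fin n → T a relation. Suppose the denial constraint ¬(p₀ ∧ … ∧ p_{m−1}) holds on r, i.e., ∀ i j, i ≠ j → ¬(∀ k, p k (r i) (r j)). Then the denial constraint (∀ i j, i ≠ j → ¬((∀ k ≠ k₀, p k (r i) (r j)) ∧ ¬ p k₀ (r i) (r j) ∧ Q (r i) (r j))) holds on r if and only if the denial constraint (∀ i j, i ≠ j → ¬((∀ k ≠ k₀, p k (r i) (r j)) ∧ Q (r i) (r j))) holds on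 r. -/
/-- Soundness of the pruning rule: if the DC `¬(⋀ k, p k)` holds on `r`, then the
candidate DC containing `{p k}_{k ≠ k₀}`, the negated predicate `¬ p k₀`, and extra
predicates `Q` is equivalent on `r` to the DC obtained by dropping `¬ p k₀`. -/
theorem pruning_sound {T : Type*} {m n : ℕ}
    (p : Fin m → T → T → Prop) (Q : T → T → Prop) (k₀ : Fin m) (r : Fin n → T)
    (h : ∀ i j, i ≠ j → ¬(∀ k, p k (r i) (r j))) :
    (∀ i j, i ≠ j →
        ¬((∀ k, k ≠ k₀ → p k (r i) (r j)) ∧ ¬ p k₀ (r i) (r j) ∧ Q (r i) (r j))) ↔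
    (∀ i j, i ≠ j → ¬((∀ k, k ≠ k₀ → p k (r i) (r j)) ∧ Q (r i) (r j))) := by
  constructor
  · intro H i j hij ⟨hk, hQ⟩
    have hnp : ¬ p k₀ (r i) (r j) := fun hp => h i j hij (fun k => by
      by_cases hk0 : k = k₀
      · exact hk0 ▸ hp
      · exact hk k hk0)
    exact H i j hij ⟨hk, hnp, hQ⟩
  · intro H i j hij ⟨hk, _, hQ⟩
    exact H i j hij ⟨hk, hQ⟩
end

section
/- Let A be an attribute type, α a linearly ordered type, E : Finset A, f g : (A → α) → α, and r : Fin n → (A → α) a relation. For indices i, j, write i ~ j when ∀ a ∈ E, r i a = r j a (same equality-partition). Then there exist indices i ≠ j with i ~ j and f (r i) < g (r j) — i.e., a violation of the denial constraint ∀ s ≠ t, ¬((∀ a ∈ E, s a = t a) ∧ f s < g t) — if and only if there exists an index j such that the set S_j := {i : Fin n | i < j ∧ i ~ j} of earlier same-partition indices is nonempty and either (the minimum of f ∘ r over S_j) < g (r j) or f (r j) < (the maximum of g ∘ r over S_j). -/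
/-- Correctness of the linear-time verification algorithm for a DC with equality
predicates over `E` and one inequality predicate `f s < g t`: a violation exists iff,
when some row `j` is processed, the set of earlier rows in the same equality-partition
is nonempty and either its running minimum of `f` is below `g (r j)` or `f (r j)` is
below its running maximum of `g`. -/
theorem one_inequality_dc_correct {A α : Type*} [LinearOrder α] {n : ℕ}
    (E : Finset A) (f g : (A → α) → α) (r : Fin n → A → α) :
    (∃ i j, i ≠ j ∧ (∀ a ∈ E, r i a = r j a) ∧ f (r i) < g (r j)) ↔
    (∃ j : Fin n, ∃ hne :
        (Finset.univ.filter (fun i => i < j ∧ ∀ a ∈ E, r i a = r j a)).Nonempty,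
      ((Finset.univ.filter (fun i => i < j ∧ ∀ a ∈ E, r i a = r j a)).inf' hne
          (fun i => f (r i)) < g (r j) ∨
       f (r j) < (Finset.univ.filter (fun i => i < j ∧ ∀ a ∈ E, r i a = r j a)).sup' hne
          (fun i => g (r i)))) := by
  constructor
  · rintro ⟨i, j, hij, hE, hlt⟩
    rcases lt_or_gt_of_ne hij with h | h
    · have hmem : i ∈ Finset.univ.filter (fun k => k < j ∧ ∀ a ∈ E, r k a = r j a) := by
        simp only [Finset.mem_filter, Finset.mem_univ, true_and]; exact ⟨h, hE⟩
      refine ⟨j, ⟨i, hmem⟩, Or.inl ?_⟩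
      exact lt_of_le_of_lt (Finset.inf'_le _ hmem) hlt
    · have hmem : j ∈ Finset.univ.filter (fun k => k < i ∧ ∀ a ∈ E, r k a = r i a) := by
        simp only [Finset.mem_filter, Finset.mem_univ, true_and]
        exact ⟨h, fun a ha => (hE a ha).symm⟩
      refine ⟨i, ⟨j, hmem⟩, Or.inr ?_⟩
      exact lt_of_lt_of_le hlt (Finset.le_sup' (fun k => g (r k)) hmem)
  · rintro ⟨j, hne, h | h⟩
    · obtain ⟨i, hmem, hmin⟩ := Finset.exists_mem_eq_inf' hne (fun i => f (r i))
      simp only [Finset.mem_filter, Finset.mem_univ, true_and] at hmem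
      exact ⟨i, j, ne_of_lt hmem.1, hmem.2, hmin ▸ h⟩
    · obtain ⟨i, hmem, hmax⟩ := Finset.exists_mem_eq_sup' hne (fun i => g (r i))
      simp only [Finset.mem_filter, Finset.mem_univ, true_and] at hmem
      exact ⟨j, i, (ne_of_lt hmem.1).symm, fun a ha => (hmem.2 a ha).symm, hmax ▸ h⟩
end
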